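/- For every nonnegative integer n, the Cauchy-Carlitz number satisfies CC_n = Σ_{j ≥ 0, r^j − 1 ≤ n} Σ_{l=0}^{r^j − 1} ((−1)^j / Π(r^j − 1)) · S1_C(n, r^j − 1) · S1_C(r^j − 1, l) · BC_l, where S1_C denotes the Stirling-Carlitz numbers of the first kind and BC_l the Bernoulli-Carlitz numbers (the outer sum is finite since S1_C(n, m) = 0 whenever n < m). -/

import Mathlib

open scoped Classical
open PowerSeries Finset

noncomputable section

variable (F : Type) [Field F] [Fintype F]

/-- The rational function field `K = 𝔽_r(T)`. -/
abbrev K : Type := RatFunc F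

/-- `r`, the cardinality of the finite field of constants. -/
def rr : ℕ := Fintype.card F

/-- The variable `T` of the rational function field. -/
def Tv : K F := RatFunc.X

/-- `[i] = T^{r^i} - T`. -/
def br (i : ℕ) : K F := Tv F ^ (rr F) ^ i - Tv F

/-- `D_0 = 1`, `D_i = [i] · D_{i-1}^r`. -/
def D : ℕ → K F
  | 0 => 1
  | i + 1 => br F (i + 1) * D i ^ rr F

/-- `L_0 = 1`, `L_i = [i] · L_{i-1}`. -/
def L : ℕ → K F
  | 0 => 1
  | i + 1 => br F (i + 1) * L i

/-- The Carlitz factorial `Π(n) = ∏_j D_j^{c_j}`, where `c_j = n / r^j % r` are the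
base-`r` digits of `n` (all digits with index `> n` vanish since `r ≥ 2`). -/
def Cf (n : ℕ) : K F := ∏ j ∈ Finset.range (n + 1), D F j ^ (n / (rr F) ^ j % rr F)

/-- The Carlitz logarithm `log_C(z) = Σ_{i ≥ 0} (-1)^i z^{r^i} / L_i`: the coefficient of
`z^m` is `(-1)^i / L_i` if `m = r^i` and `0` otherwise (note `i ≤ r^i = m` since `r ≥ 2`). -/
def logC : PowerSeries (K F) :=
  PowerSeries.mk fun m =>
    ∑ i ∈ Finset.range (m + 1), if m = (rr F) ^ i then (-1 : K F) ^ i / L F i else 0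

/-- The Carlitz exponential `e_C(z) = Σ_{i ≥ 0} z^{r^i} / D_i`. -/
def eC : PowerSeries (K F) :=
  PowerSeries.mk fun m =>
    ∑ i ∈ Finset.range (m + 1), if m = (rr F) ^ i then 1 / D F i else 0

/-- The power series `log_C(z)/z`. -/
def logCdivZ : PowerSeries (K F) :=
  PowerSeries.mk fun n => PowerSeries.coeff (R := K F) (n + 1) (logC F)

/-- The power series `e_C(z)/z`. -/
def eCdivZ : PowerSeries (K F) :=
  PowerSeries.mk fun n => PowerSeries.coeff (R := K F) (n + 1) (eC F)

lemma rr_ge_two : 2 ≤ rr F := Fintype.one_lt_card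

lemma charK : CharP (K F) (ringChar F) := by
  have h1 : Function.Injective ((algebraMap (Polynomial F) (RatFunc F)).comp Polynomial.C) :=
    (RatFunc.algebraMap_injective F).comp Polynomial.C_injective
  exact charP_of_injective_ringHom h1 (ringChar F)

lemma ringChar_prime : (ringChar F).Prime := CharP.char_is_prime F (ringChar F)

lemma rr_eq : ∃ e : ℕ, 0 < e ∧ rr F = (ringChar F) ^ e := by
  obtain ⟨n, _, hc⟩ := FiniteField.card F (ringChar F)
  exact ⟨n, n.2, hc⟩

lemma br_ne_zero (i : ℕ) (hi : 1 ≤ i) : br F i ≠ 0 := by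
  have h2 : 2 ≤ (rr F) ^ i := le_trans (rr_ge_two F) (Nat.le_self_pow (by omega) _)
  have : br F i = algebraMap (Polynomial F) (RatFunc F) (Polynomial.X ^ (rr F)^i - Polynomial.X) := by
    rw [br, Tv, ← RatFunc.algebraMap_X, map_sub, map_pow]
  rw [this]
  simp only [ne_eq, map_eq_zero_iff _ (RatFunc.algebraMap_injective F)]
  intro h
  have := congrArg (fun q => Polynomial.coeff q ((rr F)^i)) h
  simp [Polynomial.coeff_X_pow, Polynomial.coeff_X] at this
  rw [if_neg (by omega)] at this
  simp at this

lemma D_ne_zero (i : ℕ) : D F i ≠ 0 := by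
  induction i with
  | zero => simp [D]
  | succ i ih => exact mul_ne_zero (br_ne_zero F _ (by omega)) (pow_ne_zero _ ih)

lemma L_ne_zero (i : ℕ) : L F i ≠ 0 := by
  induction i with
  | zero => simp [L]
  | succ i ih => exact mul_ne_zero (br_ne_zero F _ (by omega)) ih

lemma Cf_ne_zero (n : ℕ) : Cf F n ≠ 0 :=
  Finset.prod_ne_zero_iff.2 fun j _ => pow_ne_zero _ (D_ne_zero F j)

lemma exists_frob (i : ℕ) : ∃ φ : K F →+* K F, ∀ x : K F, φ x = x ^ (rr F) ^ i := by
  haveI := charK F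
  haveI : ExpChar (K F) (ringChar F) := ExpChar.prime (ringChar_prime F)
  obtain ⟨E, _, hE⟩ := rr_eq F
  exact ⟨iterateFrobenius (K F) (ringChar F) (E * i), fun x => by
    rw [iterateFrobenius_def, hE, ← pow_mul]⟩

lemma neg_one_pow_rr (i : ℕ) : ((-1 : K F)) ^ (rr F) ^ i = -1 := by
  obtain ⟨φ, hφ⟩ := exists_frob F i
  rw [← hφ]; simp

lemma coeff_pow_char (f : PowerSeries (K F)) (n : ℕ) :
    coeff (R := K F) n (f ^ ringChar F) =
      if ringChar F ∣ n then (coeff (R := K F) (n / ringChar F) f) ^ ringChar F else 0 := by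
  haveI := charK F
  haveI : ExpChar (K F) (ringChar F) := ExpChar.prime (ringChar_prime F)
  set p := ringChar F with hpdef
  have hp : p.Prime := ringChar_prime F
  set q : Polynomial (K F) := trunc (n + 1) f with hq
  have hdvd : (X : PowerSeries (K F)) ^ (n + 1) ∣ f - (q : PowerSeries (K F)) := by
    rw [PowerSeries.X_pow_dvd_iff]
    intro m hm
    rw [map_sub, Polynomial.coeff_coe, hq, coeff_trunc, if_pos hm, sub_self]
  have h2 : (X : PowerSeries (K F)) ^ (n + 1) ∣ f ^ p - (q : PowerSeries (K F)) ^ p :=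
    hdvd.trans (sub_dvd_pow_sub_pow f _ p)
  have h3 : coeff (R := K F) n (f ^ p) = coeff (R := K F) n ((q : PowerSeries (K F)) ^ p) := by
    have := PowerSeries.X_pow_dvd_iff.1 h2 n (by omega)
    rw [map_sub, sub_eq_zero] at this
    exact this
  rw [h3, ← Polynomial.coe_pow, Polynomial.coeff_coe, ← Polynomial.map_frobenius_expand (p := p) (f := q),
    Polynomial.coeff_map, Polynomial.coeff_expand hp.pos, frobenius_def, apply_ite (· ^ p),
    zero_pow hp.ne_zero, hq, coeff_trunc, if_pos (Nat.lt_succ_of_le (Nat.div_le_self n p))]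

lemma coeff_pow_char_pow (f : PowerSeries (K F)) (e n : ℕ) :
    coeff (R := K F) n (f ^ (ringChar F) ^ e) =
      if (ringChar F) ^ e ∣ n then (coeff (R := K F) (n / (ringChar F) ^ e) f) ^ (ringChar F) ^ e
      else 0 := by
  set p := ringChar F with hpdef
  have hp : p.Prime := ringChar_prime F
  induction e generalizing f n with
  | zero => simp
  | succ e ih =>
    have h1 : f ^ p ^ (e + 1) = (f ^ p) ^ p ^ e := by
      rw [← pow_mul, pow_succ, mul_comm]
    rw [h1, ih]
    by_cases h : p ^ e ∣ n
    · rw [if_pos h, coeff_pow_char]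
      by_cases h2 : p ∣ n / p ^ e
      · have hd : p ^ (e + 1) ∣ n := by
          have := (Nat.dvd_div_iff_mul_dvd h).1 h2; rwa [← pow_succ] at this
        rw [if_pos h2, if_pos hd, Nat.div_div_eq_div_mul, ← pow_succ, ← pow_mul,
          mul_comm p (p ^ e), ← pow_succ]
      · have hd : ¬ p ^ (e + 1) ∣ n := by
          intro hc; exact h2 ((Nat.dvd_div_iff_mul_dvd h).2 (by rwa [← pow_succ]))
        rw [if_neg h2, if_neg hd, zero_pow (pow_ne_zero _ hp.ne_zero)]
    · have hd : ¬ p ^ (e + 1) ∣ n := fun hc => h ((pow_dvd_pow p (by omega)).trans hc)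
      rw [if_neg h, if_neg hd]

lemma coeff_pow_rr (f : PowerSeries (K F)) (i n : ℕ) :
    coeff (R := K F) n (f ^ (rr F) ^ i) =
      if (rr F) ^ i ∣ n then (coeff (R := K F) (n / (rr F) ^ i) f) ^ (rr F) ^ i else 0 := by
  obtain ⟨E, _, hE⟩ := rr_eq F
  rw [hE, ← pow_mul]
  exact coeff_pow_char_pow F f (E * i) n

lemma neg_one_pow_rr1 : (-1 : K F) ^ (rr F) = -1 := by
  have := neg_one_pow_rr F 1
  rwa [pow_one] at this

lemma neg_one_pow_j_rr (j : ℕ) : ((-1 : K F) ^ j) ^ (rr F) = (-1) ^ j := by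
  rw [← pow_mul, mul_comm, pow_mul, neg_one_pow_rr1]

lemma br_zero : br F 0 = 0 := by simp [br]

lemma br_add (i j : ℕ) : br F (i + j) = br F i + br F j ^ (rr F) ^ i := by
  obtain ⟨φ, hφ⟩ := exists_frob F i
  have h1 : br F j ^ (rr F) ^ i = Tv F ^ ((rr F) ^ j * (rr F) ^ i) - Tv F ^ (rr F) ^ i := by
    rw [br, ← hφ, map_sub, hφ, hφ, ← pow_mul]
  rw [br, br, h1, pow_add, mul_comm ((rr F)^i) ((rr F)^j)]
  ring

def Su (m : ℕ) : K F :=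
  ∑ i ∈ Finset.range (m + 1), (-1) ^ (m - i) / (L F (m - i) ^ (rr F) ^ i * D F i)

lemma termA (i j : ℕ) :
    br F (i + 1) * ((-1 : K F) ^ j / (L F j ^ (rr F) ^ (i + 1) * D F (i + 1))) =
      ((-1 : K F) ^ j / (L F j ^ (rr F) ^ i * D F i)) ^ rr F := by
  have hbr := br_ne_zero F (i + 1) (by omega)
  have hL := L_ne_zero F j
  have hD := D_ne_zero F i
  rw [div_pow, mul_pow, neg_one_pow_j_rr, ← pow_mul, ← pow_succ, D]
  field_simp

lemma termB (i j : ℕ) :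
    br F (j + 1) ^ (rr F) ^ i * ((-1 : K F) ^ (j + 1) / (L F (j + 1) ^ (rr F) ^ i * D F i)) =
      -((-1 : K F) ^ j / (L F j ^ (rr F) ^ i * D F i)) := by
  have hbr := br_ne_zero F (j + 1) (by omega)
  have hL := L_ne_zero F j
  have hD := D_ne_zero F i
  have hbrp : br F (j+1) ^ (rr F) ^ i ≠ 0 := pow_ne_zero _ hbr
  rw [L, mul_pow, pow_succ]
  field_simp

lemma Srec (m : ℕ) : br F (m + 1) * Su F (m + 1) = Su F m ^ rr F - Su F m := by
  rw [Su, Finset.mul_sum]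
  have split : ∀ i ∈ Finset.range (m + 2),
      br F (m + 1) * ((-1 : K F) ^ (m + 1 - i) / (L F (m + 1 - i) ^ (rr F) ^ i * D F i)) =
        br F i * ((-1 : K F) ^ (m + 1 - i) / (L F (m + 1 - i) ^ (rr F) ^ i * D F i)) +
        br F (m + 1 - i) ^ (rr F) ^ i *
          ((-1 : K F) ^ (m + 1 - i) / (L F (m + 1 - i) ^ (rr F) ^ i * D F i)) := by
    intro i hi
    rw [Finset.mem_range] at hi
    have : m + 1 = i + (m + 1 - i) := by omega
    rw [← add_mul, ← br_add, ← this]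
  rw [Finset.sum_congr rfl split, Finset.sum_add_distrib]
  have hA : ∑ i ∈ Finset.range (m + 2),
      br F i * ((-1 : K F) ^ (m + 1 - i) / (L F (m + 1 - i) ^ (rr F) ^ i * D F i)) =
      Su F m ^ rr F := by
    rw [Finset.sum_range_succ', br_zero, zero_mul, add_zero]
    have step : ∀ i ∈ Finset.range (m + 1),
        br F (i + 1) * ((-1 : K F) ^ (m + 1 - (i + 1)) /
          (L F (m + 1 - (i + 1)) ^ (rr F) ^ (i + 1) * D F (i + 1))) =
        ((-1 : K F) ^ (m - i) / (L F (m - i) ^ (rr F) ^ i * D F i)) ^ rr F := by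
      intro i hi
      have h : m + 1 - (i + 1) = m - i := by omega
      rw [h, termA]
    rw [Finset.sum_congr rfl step]
    obtain ⟨φ, hφ⟩ := exists_frob F 1
    simp only [pow_one] at hφ
    rw [Su, ← hφ, map_sum]
    exact Finset.sum_congr rfl fun i _ => (hφ _).symm
  have hB : ∑ i ∈ Finset.range (m + 2),
      br F (m + 1 - i) ^ (rr F) ^ i *
        ((-1 : K F) ^ (m + 1 - i) / (L F (m + 1 - i) ^ (rr F) ^ i * D F i)) =
      -Su F m := by
    rw [Finset.sum_range_succ]
    have hlast : m + 1 - (m + 1) = 0 := by omega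
    rw [hlast, br_zero, zero_pow (pow_ne_zero _ (by have := rr_ge_two F; omega)), zero_mul,
      add_zero]
    have step : ∀ i ∈ Finset.range (m + 1),
        br F (m + 1 - i) ^ (rr F) ^ i *
          ((-1 : K F) ^ (m + 1 - i) / (L F (m + 1 - i) ^ (rr F) ^ i * D F i)) =
        -((-1 : K F) ^ (m - i) / (L F (m - i) ^ (rr F) ^ i * D F i)) := by
      intro i hi
      rw [Finset.mem_range] at hi
      have h : m + 1 - i = (m - i) + 1 := by omega
      rw [h, termB]
    rw [Finset.sum_congr rfl step, Finset.sum_neg_distrib, Su]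
  rw [hA, hB]
  ring

lemma Su_zero : Su F 0 = 1 := by simp [Su, L, D]

lemma Su_succ (m : ℕ) : Su F (m + 1) = 0 := by
  induction m with
  | zero =>
    have h := Srec F 0
    rw [Su_zero, one_pow, sub_self] at h
    exact (mul_eq_zero.1 h).resolve_left (br_ne_zero F 1 (by omega))
  | succ m ih =>
    have h := Srec F (m + 1)
    rw [ih, zero_pow (by have := rr_ge_two F; omega), sub_self] at h
    exact (mul_eq_zero.1 h).resolve_left (br_ne_zero F (m + 2) (by omega))

lemma neg_one_pow_j_rri (j i : ℕ) : ((-1 : K F) ^ j) ^ (rr F) ^ i = (-1) ^ j := by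
  rw [← pow_mul, mul_comm, pow_mul, neg_one_pow_rr]

lemma coeff_logC_rpow (j : ℕ) : coeff (R := K F) ((rr F) ^ j) (logC F) = (-1) ^ j / L F j := by
  rw [logC, coeff_mk, Finset.sum_eq_single j]
  · rw [if_pos rfl]
  · intro i _ hne
    rw [if_neg fun h => hne (Nat.pow_right_injective (rr_ge_two F) h.symm)]
  · intro h
    exact absurd (Finset.mem_range.2 (Nat.lt_succ_of_lt
      (Nat.lt_pow_self (n := j) (by have := rr_ge_two F; omega)))) h

lemma coeff_logC_not_rpow (m : ℕ) (h : ∀ j, m ≠ (rr F) ^ j) : coeff (R := K F) m (logC F) = 0 := by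
  rw [logC, coeff_mk]
  exact Finset.sum_eq_zero fun i _ => if_neg (h i)

lemma coeff_logC_zero : coeff (R := K F) 0 (logC F) = 0 :=
  coeff_logC_not_rpow F 0 fun j => by
    have : 0 < (rr F) ^ j := Nat.pow_pos (n := j) (by have := rr_ge_two F; omega)
    omega

lemma coeff_logC_pow_of_lt (k n : ℕ) (h : n < k) : coeff (R := K F) n (logC F ^ k) = 0 := by
  have hd : (X : PowerSeries (K F)) ^ k ∣ logC F ^ k :=
    pow_dvd_pow_of_dvd (PowerSeries.X_dvd_iff.2 (by
      rw [← coeff_zero_eq_constantCoeff]; exact coeff_logC_zero F)) k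
  exact PowerSeries.X_pow_dvd_iff.1 hd n h

lemma claimA (N : ℕ) :
    ∑ i ∈ Finset.range (N + 1), coeff (R := K F) N (logC F ^ (rr F) ^ i) * (D F i)⁻¹ =
      if N = 1 then 1 else 0 := by
  have hr2 := rr_ge_two F
  by_cases hpow : ∃ m, N = (rr F) ^ m
  · obtain ⟨m, rfl⟩ := hpow
    have hmN : m < (rr F) ^ m := Nat.lt_pow_self (n := m) (by omega)
    have htrunc : ∑ i ∈ Finset.range ((rr F) ^ m + 1),
        coeff (R := K F) ((rr F) ^ m) (logC F ^ (rr F) ^ i) * (D F i)⁻¹ =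
        ∑ i ∈ Finset.range (m + 1),
          coeff (R := K F) ((rr F) ^ m) (logC F ^ (rr F) ^ i) * (D F i)⁻¹ := by
      symm
      apply Finset.sum_subset
      · intro x hx
        rw [Finset.mem_range] at *
        omega
      · intro i _ hi
        rw [Finset.mem_range, not_lt] at hi
        have hnd : ¬ (rr F) ^ i ∣ (rr F) ^ m := by
          intro hd
          have h1 := Nat.le_of_dvd (Nat.pow_pos (n := m) (by omega)) hd
          have h2 : (rr F) ^ m < (rr F) ^ i :=
            Nat.pow_lt_pow_right (by omega) (by omega)
          omega
        rw [coeff_pow_rr, if_neg hnd, zero_mul]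
    rw [htrunc]
    have hterm : ∀ i ∈ Finset.range (m + 1),
        coeff (R := K F) ((rr F) ^ m) (logC F ^ (rr F) ^ i) * (D F i)⁻¹ =
          (-1) ^ (m - i) / (L F (m - i) ^ (rr F) ^ i * D F i) := by
      intro i hi
      rw [Finset.mem_range] at hi
      have hdvd : (rr F) ^ i ∣ (rr F) ^ m := pow_dvd_pow _ (by omega)
      have hdiv : (rr F) ^ m / (rr F) ^ i = (rr F) ^ (m - i) :=
        Nat.pow_div (by omega) (by omega)
      rw [coeff_pow_rr, if_pos hdvd, hdiv, coeff_logC_rpow, div_pow, neg_one_pow_j_rri]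
      rw [← div_eq_mul_inv, div_div]
    rw [Finset.sum_congr rfl hterm]
    have : ∑ i ∈ Finset.range (m + 1),
        (-1 : K F) ^ (m - i) / (L F (m - i) ^ (rr F) ^ i * D F i) = Su F m := rfl
    rw [this]
    cases m with
    | zero => rw [Su_zero, if_pos (by simp)]
    | succ m =>
      rw [Su_succ, if_neg]
      intro h
      have : (rr F) ^ (m + 1) ≥ 2 := le_trans (by omega) (Nat.le_self_pow (by omega) _)
      omega
  · rw [if_neg (fun h => hpow ⟨0, by simpa using h⟩)]
    apply Finset.sum_eq_zero
    intro i _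
    rw [coeff_pow_rr]
    by_cases hd : (rr F) ^ i ∣ N
    · rw [if_pos hd]
      have : coeff (R := K F) (N / (rr F) ^ i) (logC F) = 0 := by
        apply coeff_logC_not_rpow
        intro j hj
        exact hpow ⟨i + j, by rw [pow_add, ← hj, Nat.mul_div_cancel' hd]⟩
      rw [this, zero_pow (pow_ne_zero _ (by omega)), zero_mul]
    · rw [if_neg hd, zero_mul]

lemma regroup (N : ℕ) (f : ℕ → ℕ → K F) (hf : ∀ l s, N < l + s → f l s = 0) :
    ∑ l ∈ Finset.range (N + 1), ∑ s ∈ Finset.range (N + 1), f l s =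
      ∑ m ∈ Finset.range (N + 1), ∑ p ∈ Finset.HasAntidiagonal.antidiagonal m, f p.1 p.2 := by
  rw [← Finset.sum_product']
  rw [← Finset.sum_filter_add_sum_filter_not (Finset.range (N+1) ×ˢ Finset.range (N+1))
    (fun p => p.1 + p.2 ≤ N)]
  have h0 : ∑ p ∈ Finset.filter (fun p => ¬ p.1 + p.2 ≤ N)
      (Finset.range (N+1) ×ˢ Finset.range (N+1)), f p.1 p.2 = 0 := by
    apply Finset.sum_eq_zero
    intro p hp
    rw [Finset.mem_filter, not_le] at hp
    exact hf _ _ hp.2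
  rw [h0, add_zero, ← Finset.sum_sigma (Finset.range (N+1)) (fun m => Finset.HasAntidiagonal.antidiagonal m)
    (fun x => f x.2.1 x.2.2)]
  apply Finset.sum_nbij' (fun p => ⟨p.1 + p.2, p⟩) (fun x => x.2)
  · intro p hp
    rw [Finset.mem_filter] at hp
    exact Finset.mem_sigma.2 ⟨Finset.mem_range.2 (Nat.lt_succ_of_le hp.2),
      Finset.HasAntidiagonal.mem_antidiagonal.2 rfl⟩
  · intro x hx
    rw [Finset.mem_sigma, Finset.mem_range, Finset.HasAntidiagonal.mem_antidiagonal] at hx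
    rw [Finset.mem_filter, Finset.mem_product, Finset.mem_range, Finset.mem_range]
    omega
  · intro p _; rfl
  · intro x hx
    rw [Finset.mem_sigma, Finset.HasAntidiagonal.mem_antidiagonal] at hx
    exact Sigma.ext hx.2 (by rw [hx.2])
  · intro p _; rfl

def Eser : PowerSeries (K F) :=
  PowerSeries.mk fun n =>
    ∑ i ∈ Finset.range (n + 1), coeff (R := K F) n (logC F ^ ((rr F) ^ i - 1)) * (D F i)⁻¹

lemma i_lt_rpow_sub (i a : ℕ) (h : a < i) : a < (rr F) ^ i - 1 := by
  have := Nat.lt_pow_self (n := i) (by have := rr_ge_two F; omega : 1 < rr F)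
  omega

lemma coeff_Eser_ext (a M : ℕ) (h : a ≤ M) :
    coeff (R := K F) a (Eser F) =
      ∑ i ∈ Finset.range (M + 1), coeff (R := K F) a (logC F ^ ((rr F) ^ i - 1)) * (D F i)⁻¹ := by
  rw [Eser, coeff_mk]
  apply Finset.sum_subset (Finset.range_subset_range.2 (by omega))
  intro i hi hni
  rw [Finset.mem_range] at *
  rw [coeff_logC_pow_of_lt F _ _ (i_lt_rpow_sub F i a (by omega)), zero_mul]

lemma Eser_mul_logC : Eser F * logC F = X := by
  ext N
  rw [PowerSeries.coeff_mul]
  have h1 : ∀ p ∈ Finset.HasAntidiagonal.antidiagonal N,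
      coeff (R := K F) p.1 (Eser F) * coeff (R := K F) p.2 (logC F) =
      ∑ i ∈ Finset.range (N + 1),
        coeff (R := K F) p.1 (logC F ^ ((rr F) ^ i - 1)) * (D F i)⁻¹ * coeff (R := K F) p.2 (logC F) := by
    intro p hp
    rw [Finset.HasAntidiagonal.mem_antidiagonal] at hp
    rw [coeff_Eser_ext F p.1 N (by omega), Finset.sum_mul]
  rw [Finset.sum_congr rfl h1, Finset.sum_comm]
  have h2 : ∀ i ∈ Finset.range (N + 1),
      ∑ p ∈ Finset.HasAntidiagonal.antidiagonal N,
        coeff (R := K F) p.1 (logC F ^ ((rr F) ^ i - 1)) * (D F i)⁻¹ * coeff (R := K F) p.2 (logC F) =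
      coeff (R := K F) N (logC F ^ (rr F) ^ i) * (D F i)⁻¹ := by
    intro i _
    have hpos : 1 ≤ (rr F) ^ i := Nat.pow_pos (n := i) (by have := rr_ge_two F; omega)
    have : logC F ^ (rr F) ^ i = logC F ^ ((rr F) ^ i - 1) * logC F := by
      rw [← pow_succ, Nat.sub_add_cancel hpos]
    rw [this, PowerSeries.coeff_mul, Finset.sum_mul]
    apply Finset.sum_congr rfl
    intro p _
    ring
  rw [Finset.sum_congr rfl h2, claimA, PowerSeries.coeff_X]

lemma logC_eq_X_mul : logC F = X * logCdivZ F := by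
  ext N
  cases N with
  | zero =>
    rw [coeff_logC_zero]
    rw [coeff_zero_eq_constantCoeff, map_mul, constantCoeff_X, zero_mul]
  | succ n => rw [coeff_succ_X_mul, logCdivZ, coeff_mk]

lemma Eser_mul_logCdivZ : Eser F * logCdivZ F = 1 := by
  have h := Eser_mul_logC F
  rw [logC_eq_X_mul] at h
  have h2 : X * (Eser F * logCdivZ F) = X * 1 := by
    rw [mul_one]
    calc X * (Eser F * logCdivZ F) = Eser F * (X * logCdivZ F) := by ring
      _ = X := h
  exact mul_left_cancel₀ PowerSeries.X_ne_zero h2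

lemma coeff_eCdivZ_ext (s M : ℕ) (h : s ≤ M) :
    coeff (R := K F) s (eCdivZ F) =
      ∑ i ∈ Finset.range (M + 1), if s + 1 = (rr F) ^ i then (D F i)⁻¹ else 0 := by
  have key : ∀ A, s + 1 ≤ A →
      (∑ i ∈ Finset.range A, if s + 1 = (rr F) ^ i then (D F i)⁻¹ else 0) =
      ∑ i ∈ Finset.range (s + 1), if s + 1 = (rr F) ^ i then (D F i)⁻¹ else 0 := by
    intro A hA
    symm
    apply Finset.sum_subset (Finset.range_subset_range.2 hA)
    intro i hi hni
    rw [Finset.mem_range] at *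
    have h2 : s + 1 < (rr F) ^ i := by
      have := Nat.lt_pow_self (n := i) (by have := rr_ge_two F; omega : 1 < rr F)
      omega
    rw [if_neg (by omega)]
  rw [eCdivZ, coeff_mk, eC, coeff_mk]
  have : ∀ i, (if s + 1 = (rr F) ^ i then 1 / D F i else 0) =
      (if s + 1 = (rr F) ^ i then (D F i)⁻¹ else 0) := by
    intro i; rw [one_div]
  simp only [this]
  rw [key (s + 2) (by omega), ← key (M + 1) (by omega)]

lemma Bser_eq_logCdivZ (BC : ℕ → K F)
    (hBC : (PowerSeries.mk fun n => BC n / Cf F n) * eCdivZ F = 1) :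
    (PowerSeries.mk fun N => ∑ l ∈ Finset.range (N + 1),
      BC l / Cf F l * coeff (R := K F) N (logC F ^ l)) = logCdivZ F := by
  set Bser := PowerSeries.mk fun N => ∑ l ∈ Finset.range (N + 1),
      BC l / Cf F l * coeff (R := K F) N (logC F ^ l) with hBdef
  have key : Bser * Eser F = 1 := by
    ext N
    rw [PowerSeries.coeff_mul]
    have hBext : ∀ a : ℕ, a ≤ N → coeff (R := K F) a Bser =
        ∑ l ∈ Finset.range (N + 1), BC l / Cf F l * coeff (R := K F) a (logC F ^ l) := by
      intro a ha
      rw [hBdef, coeff_mk]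
      apply Finset.sum_subset (Finset.range_subset_range.2 (by omega))
      intro l hl hnl
      rw [Finset.mem_range] at *
      rw [coeff_logC_pow_of_lt F _ _ (by omega), mul_zero]
    have h1 : ∀ p ∈ Finset.HasAntidiagonal.antidiagonal N,
        coeff (R := K F) p.1 Bser * coeff (R := K F) p.2 (Eser F) =
        ∑ l ∈ Finset.range (N + 1), ∑ i ∈ Finset.range (N + 1),
          BC l / Cf F l * (D F i)⁻¹ *
            (coeff (R := K F) p.1 (logC F ^ l) * coeff (R := K F) p.2 (logC F ^ ((rr F) ^ i - 1))) := by
      intro p hp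
      rw [Finset.HasAntidiagonal.mem_antidiagonal] at hp
      rw [hBext p.1 (by omega), coeff_Eser_ext F p.2 N (by omega), Finset.sum_mul_sum]
      apply Finset.sum_congr rfl; intro l _
      apply Finset.sum_congr rfl; intro i _
      ring
    rw [Finset.sum_congr rfl h1, Finset.sum_comm]
    have h2 : ∀ l ∈ Finset.range (N + 1),
        ∑ p ∈ Finset.HasAntidiagonal.antidiagonal N, ∑ i ∈ Finset.range (N + 1),
          BC l / Cf F l * (D F i)⁻¹ *
            (coeff (R := K F) p.1 (logC F ^ l) * coeff (R := K F) p.2 (logC F ^ ((rr F) ^ i - 1))) =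
        ∑ i ∈ Finset.range (N + 1),
          BC l / Cf F l * (D F i)⁻¹ * coeff (R := K F) N (logC F ^ (l + ((rr F) ^ i - 1))) := by
      intro l _
      rw [Finset.sum_comm]
      apply Finset.sum_congr rfl
      intro i _
      rw [pow_add, PowerSeries.coeff_mul, Finset.mul_sum]
    rw [Finset.sum_congr rfl h2]
    -- convert the i-sum into a sum over s with eCdivZ coefficients
    have h3 : ∀ l ∈ Finset.range (N + 1),
        ∑ i ∈ Finset.range (N + 1),
          BC l / Cf F l * (D F i)⁻¹ * coeff (R := K F) N (logC F ^ (l + ((rr F) ^ i - 1))) =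
        ∑ s ∈ Finset.range (N + 1),
          BC l / Cf F l * coeff (R := K F) s (eCdivZ F) * coeff (R := K F) N (logC F ^ (l + s)) := by
      intro l _
      have hrhs : ∀ s ∈ Finset.range (N + 1),
          BC l / Cf F l * coeff (R := K F) s (eCdivZ F) * coeff (R := K F) N (logC F ^ (l + s)) =
          ∑ i ∈ Finset.range (N + 1), (if s + 1 = (rr F) ^ i then
            BC l / Cf F l * (D F i)⁻¹ * coeff (R := K F) N (logC F ^ (l + s)) else 0) := by
        intro s hs
        rw [Finset.mem_range] at hs
        rw [coeff_eCdivZ_ext F s N (by omega), Finset.mul_sum, Finset.sum_mul]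
        apply Finset.sum_congr rfl
        intro i _
        split_ifs with h
        · ring
        · rw [mul_zero, zero_mul]
      rw [Finset.sum_congr rfl hrhs, Finset.sum_comm]
      apply Finset.sum_congr rfl
      intro i _
      have hpos : 1 ≤ (rr F) ^ i := Nat.pow_pos (n := i) (by have := rr_ge_two F; omega)
      have hiff : ∀ s, s + 1 = (rr F) ^ i ↔ s = (rr F) ^ i - 1 := by intro s; omega
      have step : ∀ s ∈ Finset.range (N + 1),
          (if s + 1 = (rr F) ^ i then
            BC l / Cf F l * (D F i)⁻¹ * coeff (R := K F) N (logC F ^ (l + s)) else 0) =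
          (if s = (rr F) ^ i - 1 then
            BC l / Cf F l * (D F i)⁻¹ * coeff (R := K F) N (logC F ^ (l + s)) else 0) := by
        intro s _
        exact if_congr (hiff s) rfl rfl
      rw [Finset.sum_congr rfl step, Finset.sum_ite_eq' (Finset.range (N + 1))]
      split_ifs with h
      · rfl
      · rw [Finset.mem_range, not_lt] at h
        rw [coeff_logC_pow_of_lt F _ _ (by omega), mul_zero]
    rw [Finset.sum_congr rfl h3]
    rw [regroup F N (fun l s => BC l / Cf F l * coeff (R := K F) s (eCdivZ F) *
      coeff (R := K F) N (logC F ^ (l + s)))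
      (fun l s hls => by
        show BC l / Cf F l * coeff (R := K F) s (eCdivZ F) * coeff (R := K F) N (logC F ^ (l + s)) = 0
        rw [coeff_logC_pow_of_lt F _ _ hls, mul_zero])]
    have h4 : ∀ m ∈ Finset.range (N + 1),
        ∑ p ∈ Finset.HasAntidiagonal.antidiagonal m,
          BC p.1 / Cf F p.1 * coeff (R := K F) p.2 (eCdivZ F) * coeff (R := K F) N (logC F ^ (p.1 + p.2)) =
        (if m = 0 then (1 : K F) else 0) * coeff (R := K F) N (logC F ^ m) := by
      intro m _
      have : ∀ p ∈ Finset.HasAntidiagonal.antidiagonal m,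
          BC p.1 / Cf F p.1 * coeff (R := K F) p.2 (eCdivZ F) * coeff (R := K F) N (logC F ^ (p.1 + p.2)) =
          BC p.1 / Cf F p.1 * coeff (R := K F) p.2 (eCdivZ F) * coeff (R := K F) N (logC F ^ m) := by
        intro p hp
        rw [Finset.HasAntidiagonal.mem_antidiagonal] at hp
        rw [hp]
      rw [Finset.sum_congr rfl this, ← Finset.sum_mul]
      congr 1
      have := congrArg (coeff (R := K F) m) hBC
      rw [PowerSeries.coeff_mul] at this
      rw [← PowerSeries.coeff_one m, ← this]
      apply Finset.sum_congr rfl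
      intro p _
      rw [coeff_mk]
    rw [Finset.sum_congr rfl h4]
    have h5 : ∀ m ∈ Finset.range (N + 1),
        (if m = 0 then (1 : K F) else 0) * coeff (R := K F) N (logC F ^ m) =
        (if m = 0 then coeff (R := K F) N (logC F ^ (0:ℕ)) else 0) := by
      intro m _
      split_ifs with h
      · rw [h, one_mul]
      · rw [zero_mul]
    rw [Finset.sum_congr rfl h5, Finset.sum_ite_eq' (Finset.range (N + 1)) 0
      (fun _ => coeff (R := K F) N (logC F ^ (0:ℕ))), if_pos (Finset.mem_range.2 (by omega))]
    rw [pow_zero, PowerSeries.coeff_one]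
  calc Bser = Bser * (Eser F * logCdivZ F) := by rw [Eser_mul_logCdivZ, mul_one]
    _ = Bser * Eser F * logCdivZ F := by ring
    _ = logCdivZ F := by rw [key, one_mul]

lemma pow_pred_div (q : ℕ) (hq : 2 ≤ q) (j t : ℕ) (h : t ≤ j) :
    (q ^ j - 1) / q ^ t = q ^ (j - t) - 1 := by
  have hpt : 0 < q ^ t := Nat.pow_pos (n := t) (by omega)
  have hpjt : 0 < q ^ (j - t) := Nat.pow_pos (by omega)
  have hmul : q ^ t * q ^ (j - t) = q ^ j := by rw [← pow_add]; congr 1; omega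
  have h1 : q ^ j - 1 = q ^ t * (q ^ (j - t) - 1) + (q ^ t - 1) := by
    have h2 : q ^ t * (q ^ (j - t) - 1) = q ^ t * q ^ (j - t) - q ^ t := by
      rw [Nat.mul_sub, mul_one]
    rw [h2, hmul]
    have : q ^ t ≤ q ^ j := by rw [← hmul]; exact Nat.le_mul_of_pos_right _ hpjt
    omega
  rw [h1, Nat.mul_add_div hpt, Nat.div_eq_of_lt (by omega), add_zero]

lemma pow_pred_mod (q : ℕ) (hq : 2 ≤ q) (k : ℕ) (hk : 1 ≤ k) :
    (q ^ k - 1) % q = q - 1 := by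
  have hpk : 0 < q ^ (k - 1) := Nat.pow_pos (by omega)
  have hmul : q * q ^ (k - 1) = q ^ k := by rw [← pow_succ']; congr 1; omega
  have h1 : q ^ k - 1 = q * (q ^ (k - 1) - 1) + (q - 1) := by
    have h2 : q * (q ^ (k - 1) - 1) = q * q ^ (k - 1) - q := by rw [Nat.mul_sub, mul_one]
    rw [h2, hmul]
    have : q ≤ q ^ k := by rw [← hmul]; exact Nat.le_mul_of_pos_right _ hpk
    omega
  rw [h1, Nat.mul_add_mod, Nat.mod_eq_of_lt (by omega)]

lemma Cf_rpow_sub_one (j : ℕ) :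
    Cf F ((rr F) ^ j - 1) = ∏ t ∈ Finset.range j, D F t ^ (rr F - 1) := by
  have hq := rr_ge_two F
  set q := rr F with hqdef
  have hdig : ∀ t, t < j → (q ^ j - 1) / q ^ t % q = q - 1 := by
    intro t ht
    rw [pow_pred_div q hq j t (by omega), pow_pred_mod q hq (j - t) (by omega)]
  have hdig0 : ∀ t, j ≤ t → (q ^ j - 1) / q ^ t % q = 0 := by
    intro t ht
    have h1 : q ^ j ≤ q ^ t := Nat.pow_le_pow_right (by omega) ht
    have h2 : 0 < q ^ j := Nat.pow_pos (by omega)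
    rw [Nat.div_eq_of_lt (by omega), Nat.zero_mod]
  have hjlt : j < q ^ j := Nat.lt_pow_self (n := j) (by omega)
  rw [Cf]
  rw [← Finset.prod_subset (Finset.range_subset_range.2 (by omega : j ≤ q ^ j - 1 + 1))
    (fun t _ hnt => by
      rw [hdig0 t (by rw [Finset.mem_range] at hnt; omega), pow_zero])]
  exact Finset.prod_congr rfl fun t ht => by rw [hdig t (Finset.mem_range.1 ht)]

lemma D_eq_Cf_mul_L (j : ℕ) : D F j = Cf F ((rr F) ^ j - 1) * L F j := by
  have hq := rr_ge_two F
  induction j with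
  | zero => rw [Cf_rpow_sub_one]; simp [D, L]
  | succ j ih =>
    have hpow : D F j ^ rr F = D F j ^ (rr F - 1) * D F j := by
      conv_lhs => rw [show rr F = (rr F - 1) + 1 from by omega]
      rw [pow_succ]
    rw [show D F (j+1) = br F (j+1) * D F j ^ rr F from rfl,
      show L F (j+1) = br F (j+1) * L F j from rfl,
      hpow, Cf_rpow_sub_one, Finset.prod_range_succ, ih, Cf_rpow_sub_one]
    ring


/-- Theorem: `CC_n = Σ_{j ≥ 0, r^j - 1 ≤ n} Σ_{l=0}^{r^j - 1}
((-1)^j / Π(r^j - 1)) · S1_C(n, r^j - 1) · S1_C(r^j - 1, l) · BC_l`.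
(Any `j` with `r^j - 1 ≤ n` satisfies `j ≤ n` since `r ≥ 2`.) -/
theorem cauchyCarlitz_eq_double_sum
    (BC CC : ℕ → K F) (S1C : ℕ → ℕ → K F)
    (hBC : (PowerSeries.mk fun n => BC n / Cf F n) * eCdivZ F = 1)
    (hCC : (PowerSeries.mk fun n => CC n / Cf F n) * logCdivZ F = 1)
    (hS1C : ∀ n k : ℕ,
      PowerSeries.coeff (R := K F) n (logC F ^ k) / Cf F k = S1C n k / Cf F n)
    (n : ℕ) :
    CC n = ∑ j ∈ (Finset.range (n + 1)).filter (fun j => (rr F) ^ j - 1 ≤ n),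
      ∑ l ∈ Finset.range ((rr F) ^ j - 1 + 1),
        ((-1 : K F) ^ j / Cf F ((rr F) ^ j - 1)) *
          S1C n ((rr F) ^ j - 1) * S1C ((rr F) ^ j - 1) l * BC l := by
  have hr2 := rr_ge_two F
  have hCCE : (PowerSeries.mk fun k => CC k / Cf F k) = Eser F := by
    calc (PowerSeries.mk fun k => CC k / Cf F k)
        = (PowerSeries.mk fun k => CC k / Cf F k) * (Eser F * logCdivZ F) := by
          rw [Eser_mul_logCdivZ, mul_one]
      _ = (PowerSeries.mk fun k => CC k / Cf F k) * logCdivZ F * Eser F := by ring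
      _ = Eser F := by rw [hCC, one_mul]
  have hCCn : CC n / Cf F n = ∑ i ∈ Finset.range (n + 1),
      coeff (R := K F) n (logC F ^ ((rr F) ^ i - 1)) * (D F i)⁻¹ := by
    have h := congrArg (coeff (R := K F) n) hCCE
    rwa [coeff_mk, Eser, coeff_mk] at h
  have hS1C' : ∀ a b : ℕ, S1C a b = Cf F a * coeff (R := K F) a (logC F ^ b) / Cf F b := by
    intro a b
    have h := hS1C a b
    rw [div_eq_div_iff (Cf_ne_zero F b) (Cf_ne_zero F a)] at h
    rw [eq_div_iff (Cf_ne_zero F b), ← h]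
    ring
  have hB := Bser_eq_logCdivZ F BC hBC
  have hW : ∀ j : ℕ, ∑ l ∈ Finset.range ((rr F) ^ j - 1 + 1), S1C ((rr F) ^ j - 1) l * BC l =
      Cf F ((rr F) ^ j - 1) * ((-1 : K F) ^ j / L F j) := by
    intro j
    set m := (rr F) ^ j - 1 with hm
    have hml : ∀ l, S1C m l * BC l =
        Cf F m * (BC l / Cf F l * coeff (R := K F) m (logC F ^ l)) := by
      intro l
      rw [hS1C' m l]
      field_simp
    rw [Finset.sum_congr rfl (fun l _ => hml l), ← Finset.mul_sum]
    congr 1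
    have h := congrArg (coeff (R := K F) m) hB
    rw [coeff_mk] at h
    rw [h, logCdivZ, coeff_mk]
    have hp1 : 1 ≤ (rr F) ^ j := Nat.pow_pos (n := j) (by omega)
    have hm1 : m + 1 = (rr F) ^ j := by omega
    rw [hm1, coeff_logC_rpow]
  -- simplify each outer term of the RHS
  have hterm : ∀ j : ℕ,
      ∑ l ∈ Finset.range ((rr F) ^ j - 1 + 1),
        ((-1 : K F) ^ j / Cf F ((rr F) ^ j - 1)) *
          S1C n ((rr F) ^ j - 1) * S1C ((rr F) ^ j - 1) l * BC l =
      Cf F n * (coeff (R := K F) n (logC F ^ ((rr F) ^ j - 1)) * (D F j)⁻¹) := by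
    intro j
    have hfac : ∀ l, ((-1 : K F) ^ j / Cf F ((rr F) ^ j - 1)) * S1C n ((rr F) ^ j - 1) *
        S1C ((rr F) ^ j - 1) l * BC l =
        (((-1 : K F) ^ j / Cf F ((rr F) ^ j - 1)) * S1C n ((rr F) ^ j - 1)) *
          (S1C ((rr F) ^ j - 1) l * BC l) := fun l => by ring
    rw [Finset.sum_congr rfl (fun l _ => hfac l), ← Finset.mul_sum, hW j]
    rw [hS1C' n ((rr F) ^ j - 1), D_eq_Cf_mul_L]
    have hCfm := Cf_ne_zero F ((rr F) ^ j - 1)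
    have hCfn := Cf_ne_zero F n
    have hL := L_ne_zero F j
    have hsq : ((-1 : K F) ^ j) * ((-1) ^ j) = 1 := by
      rw [← pow_add, Even.neg_one_pow ⟨j, rfl⟩]
    field_simp
    linear_combination (coeff (R := K F) n (logC F ^ ((rr F) ^ j - 1))) * hsq
  rw [Finset.sum_congr rfl (fun j _ => hterm j)]
  have hCCn' : CC n = ∑ i ∈ Finset.range (n + 1),
      Cf F n * (coeff (R := K F) n (logC F ^ ((rr F) ^ i - 1)) * (D F i)⁻¹) := by
    rw [← Finset.mul_sum, ← hCCn, mul_div_cancel₀ _ (Cf_ne_zero F n)]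
  rw [hCCn']
  symm
  apply Finset.sum_filter_of_ne
  intro i hi hne
  by_contra hgt
  rw [not_le] at hgt
  rw [coeff_logC_pow_of_lt F _ _ hgt, zero_mul, mul_zero] at hne
  exact hne rfl
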